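/- Let σ be the logistic function and r > 0, c, d ∈ ℝ. Define the Negative Binomial hurdle kernel: p(0, θ) = 1 − σ(c + θ) and p(y, θ) = σ(c + θ) · C(y−1+r−1, y−1) (1 − σ(d + θ/r))^r σ(d + θ/r)^{y−1} for y ≥ 1. Then for every y ∈ ℤ≥0, the ratio θ ↦ p(y+1, θ)/p(y, θ) is nondecreasing in θ. -/

import Mathlib

open Real

noncomputable def logistic (x : ℝ) : ℝ := (1 + Real.exp (-x))⁻¹

lemma logistic_pos (x : ℝ) : 0 < logistic x := by
  unfold logistic
  positivity

lemma one_sub_logistic (x : ℝ) : 1 - logistic x = Real.exp (-x) * logistic x := by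
  unfold logistic
  have h : (0:ℝ) < 1 + Real.exp (-x) := by positivity
  field_simp
  ring

lemma one_sub_logistic_pos (x : ℝ) : 0 < 1 - logistic x := by
  rw [one_sub_logistic]
  exact mul_pos (Real.exp_pos _) (logistic_pos _)

lemma logistic_mono : Monotone logistic := by
  intro a b hab
  unfold logistic
  have h1 : (0:ℝ) < 1 + Real.exp (-b) := by positivity
  apply inv_anti₀ h1
  have := Real.exp_le_exp.2 (neg_le_neg hab)
  linarith

/-- key identity for the y = 0 case. -/
lemma key0 (r : ℝ) (hr : 0 < r) (c d θ : ℝ) :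
    logistic (c + θ) / (1 - logistic (c + θ)) * (1 - logistic (d + θ / r)) ^ (r : ℝ)
      = Real.exp (c - r * d) * logistic (d + θ / r) ^ (r : ℝ) := by
  have h1 : logistic (c + θ) / (1 - logistic (c + θ)) = Real.exp (c + θ) := by
    have hl : logistic (c + θ) ≠ 0 := (logistic_pos _).ne'
    rw [one_sub_logistic]
    field_simp
    rw [← Real.exp_add]
    have h5 : -(c + θ) + (c + θ) = 0 := by ring
    rw [h5, Real.exp_zero]
  have h2 : (1 - logistic (d + θ / r)) ^ (r : ℝ)
      = Real.exp (-(d + θ / r) * r) * logistic (d + θ / r) ^ (r : ℝ) := by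
    rw [one_sub_logistic, Real.mul_rpow (Real.exp_pos _).le (logistic_pos _).le,
      Real.rpow_def_of_pos (Real.exp_pos _), Real.log_exp]
  rw [h1, h2, ← mul_assoc, ← Real.exp_add]
  congr 2
  field_simp
  ring

theorem nb_hurdle_kernel_ratio_monotone
    (r : ℝ) (hr : 0 < r) (c d : ℝ)
    (p : ℕ → ℝ → ℝ)
    (hp0 : ∀ θ : ℝ, p 0 θ = 1 - logistic (c + θ))
    (hp1 : ∀ (n : ℕ) (θ : ℝ), p (n + 1) θ =
      logistic (c + θ) * (Real.Gamma ((n : ℝ) + r) /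
        (Real.Gamma r * (Nat.factorial n))) *
        (1 - logistic (d + θ / r)) ^ (r : ℝ) *
        (logistic (d + θ / r)) ^ n) :
    ∀ y : ℕ, Monotone (fun θ : ℝ => p (y + 1) θ / p y θ) := by
  have hΓr : 0 < Real.Gamma r := Real.Gamma_pos_of_pos hr
  have hσu_mono : Monotone (fun θ : ℝ => logistic (d + θ / r)) := by
    intro a b hab
    have h : a / r ≤ b / r := by gcongr
    exact logistic_mono (by linarith)
  intro y
  cases y with
  | zero =>
    have heq : (fun θ : ℝ => p 1 θ / p 0 θ)
        = fun θ : ℝ => (Real.Gamma ((0 : ℝ) + r) / (Real.Gamma r * (Nat.factorial 0)))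
            * (Real.exp (c - r * d) * logistic (d + θ / r) ^ (r : ℝ)) := by
      funext θ
      rw [show (1 : ℕ) = 0 + 1 from rfl, hp1 0 θ, hp0 θ]
      rw [← key0 r hr c d θ]
      have h0 : (1 - logistic (c + θ)) ≠ 0 := (one_sub_logistic_pos _).ne'
      field_simp
      try ring
    rw [heq]
    intro a b hab
    have hK : 0 ≤ Real.Gamma ((0 : ℝ) + r) / (Real.Gamma r * (Nat.factorial 0)) := by
      have h3 : 0 < Real.Gamma ((0 : ℝ) + r) := Real.Gamma_pos_of_pos (by linarith)
      positivity
    have hrp : logistic (d + a / r) ^ (r : ℝ) ≤ logistic (d + b / r) ^ (r : ℝ) :=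
      Real.rpow_le_rpow (logistic_pos _).le (hσu_mono hab) hr.le
    have h4 : Real.exp (c - r * d) * logistic (d + a / r) ^ (r : ℝ)
        ≤ Real.exp (c - r * d) * logistic (d + b / r) ^ (r : ℝ) :=
      mul_le_mul_of_nonneg_left hrp (Real.exp_pos _).le
    exact mul_le_mul_of_nonneg_left h4 hK
  | succ n =>
    set K : ℝ := (Real.Gamma (((n + 1 : ℕ) : ℝ) + r) / (Real.Gamma r * (Nat.factorial (n + 1))))
      * ((Real.Gamma r * (Nat.factorial n)) / Real.Gamma ((n : ℝ) + r)) with hKdef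
    have hΓn : 0 < Real.Gamma ((n : ℝ) + r) :=
      Real.Gamma_pos_of_pos (by positivity)
    have hΓn1 : 0 < Real.Gamma (((n + 1 : ℕ) : ℝ) + r) :=
      Real.Gamma_pos_of_pos (by positivity)
    have hfn : (0:ℝ) < (Nat.factorial n : ℝ) := by exact_mod_cast (Nat.factorial_pos _)
    have hfn1 : (0:ℝ) < (Nat.factorial (n + 1) : ℝ) := by exact_mod_cast (Nat.factorial_pos _)
    have hK : 0 ≤ K := by rw [hKdef]; positivity
    have heq : (fun θ : ℝ => p (n + 1 + 1) θ / p (n + 1) θ)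
        = fun θ : ℝ => K * logistic (d + θ / r) := by
      funext θ
      rw [hp1 (n + 1) θ, hp1 n θ, hKdef]
      have hσc : logistic (c + θ) ≠ 0 := (logistic_pos _).ne'
      have hApos : 0 < (1 - logistic (d + θ / r)) ^ (r : ℝ) :=
        Real.rpow_pos_of_pos (one_sub_logistic_pos _) r
      have hσupos : 0 < logistic (d + θ / r) := logistic_pos _
      set σc := logistic (c + θ)
      set u := logistic (d + θ / r)
      set A := (1 - logistic (d + θ / r)) ^ (r : ℝ)
      have hupow : u ^ n ≠ 0 := pow_ne_zero _ hσupos.ne'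
      field_simp
      ring
    rw [heq]
    intro a b hab
    exact mul_le_mul_of_nonneg_left (hσu_mono hab) hK
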